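/- Let ξ1, ξ2 be independent with ξi ~ Exp(xi), xi > 0, and s > 0. On the event {ξ1 < ξ2 ≤ ξ1 + s·x1} ∪ {ξ2 < ξ1 ≤ ξ2 + s·x2} (the two blocks merge by time s in Uribe's diagram, n = 2 case), the minimum ξ12 := ξ1 ∧ ξ2 satisfies: the conditional law of ξ12 given this event is Exp(x1 + x2). Equivalently, P(ξ1 ∧ ξ2 ∈ dv, merger by time s) = (x1+x2)e^{-(x1+x2)v} dv · (1 - e^{-x1 x2 s}). -/

import Mathlib

open MeasureTheory ProbabilityTheory Real Set

lemma expMeasure_eq_withDensity (r : ℝ) :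
    expMeasure r = volume.withDensity (exponentialPDF r) := rfl

lemma measurable_exponentialPDF (r : ℝ) : Measurable (exponentialPDF r) :=
  (measurable_exponentialPDFReal r).ennreal_ofReal

lemma expMeasure_apply (r : ℝ) {s : Set ℝ} (hs : MeasurableSet s) :
    expMeasure r s = ∫⁻ x in s, exponentialPDF r x := by
  rw [expMeasure_eq_withDensity, withDensity_apply _ hs]

lemma exp_le_one' {r v : ℝ} (hr : 0 < r) (hv : 0 ≤ v) : Real.exp (-(r * v)) ≤ 1 :=
  Real.exp_le_one_iff.2 (neg_nonpos.2 (by positivity))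

lemma expMeasure_Iic {r : ℝ} (hr : 0 < r) {v : ℝ} (hv : 0 ≤ v) :
    expMeasure r (Set.Iic v) = ENNReal.ofReal (1 - Real.exp (-(r * v))) := by
  rw [expMeasure_apply r measurableSet_Iic, lintegral_exponentialPDF_eq_antiDeriv hr, if_pos hv]

lemma expMeasure_Ioi {r : ℝ} (hr : 0 < r) {v : ℝ} (hv : 0 ≤ v) :
    expMeasure r (Set.Ioi v) = ENNReal.ofReal (Real.exp (-(r * v))) := by
  have hP : IsProbabilityMeasure (expMeasure r) := isProbabilityMeasure_expMeasure hr
  rw [← Set.compl_Iic, measure_compl measurableSet_Iic (measure_ne_top _ _), measure_univ,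
    expMeasure_Iic hr hv]
  have h1 : (0:ℝ) ≤ 1 - Real.exp (-(r * v)) := by linarith [exp_le_one' hr hv]
  rw [← ENNReal.ofReal_one, ← ENNReal.ofReal_sub _ h1]
  ring_nf

lemma expMeasure_Ioc {r : ℝ} (hr : 0 < r) {a b : ℝ} (ha : 0 ≤ a) (hab : a ≤ b) :
    expMeasure r (Set.Ioc a b) = ENNReal.ofReal (Real.exp (-(r * a)) - Real.exp (-(r * b))) := by
  have hP : IsProbabilityMeasure (expMeasure r) := isProbabilityMeasure_expMeasure hr
  rw [← Set.Ioi_diff_Ioi, measure_diff (Set.Ioi_subset_Ioi hab) measurableSet_Ioi.nullMeasurableSet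
    (measure_ne_top _ _), expMeasure_Ioi hr ha, expMeasure_Ioi hr (ha.trans hab),
    ← ENNReal.ofReal_sub _ (Real.exp_nonneg _)]

/-- Key computation over the product measure (one of the two symmetric pieces). -/
lemma key_piece {x1 x2 s v : ℝ} (h1 : 0 < x1) (h2 : 0 < x2) (hs : 0 < s) (hv : 0 ≤ v) :
    ((expMeasure x1).prod (expMeasure x2))
      {p : ℝ × ℝ | (p.1 < p.2 ∧ p.2 ≤ p.1 + s * x1) ∧ v < min p.1 p.2} =
    ENNReal.ofReal ((x1 / (x1 + x2)) *
      (Real.exp (-((x1 + x2) * v)) * (1 - Real.exp (-(x1 * x2 * s))))) := by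
  have hP1 : IsProbabilityMeasure (expMeasure x1) := isProbabilityMeasure_expMeasure h1
  have hP2 : IsProbabilityMeasure (expMeasure x2) := isProbabilityMeasure_expMeasure h2
  have hc0 : (0:ℝ) ≤ 1 - Real.exp (-(x1 * x2 * s)) := by
    linarith [exp_le_one' (mul_pos h1 h2) hs.le]
  have hA : MeasurableSet {p : ℝ × ℝ | (p.1 < p.2 ∧ p.2 ≤ p.1 + s * x1) ∧ v < min p.1 p.2} := by
    apply MeasurableSet.inter
    · exact (measurableSet_lt measurable_fst measurable_snd).inter
        (measurableSet_le measurable_snd (measurable_fst.add_const _))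
    · exact measurableSet_lt measurable_const (measurable_fst.min measurable_snd)
  rw [Measure.prod_apply hA]
  have hslice : ∀ a : ℝ,
      expMeasure x2 (Prod.mk a ⁻¹' {p : ℝ × ℝ | (p.1 < p.2 ∧ p.2 ≤ p.1 + s * x1) ∧ v < min p.1 p.2})
      = Set.indicator (Set.Ioi v) (fun a => expMeasure x2 (Set.Ioc a (a + s * x1))) a := by
    intro a
    by_cases hva : v < a
    · rw [Set.indicator_of_mem (Set.mem_Ioi.2 hva)]
      congr 1
      ext b
      simp only [Set.mem_preimage, Set.mem_setOf_eq, Set.mem_Ioc]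
      constructor
      · rintro ⟨⟨hab, hb⟩, _⟩; exact ⟨hab, hb⟩
      · rintro ⟨hab, hb⟩
        exact ⟨⟨hab, hb⟩, lt_min hva (hva.trans hab)⟩
    · rw [Set.indicator_of_notMem (by simpa using hva)]
      have hemp : (Prod.mk a ⁻¹'
          {p : ℝ × ℝ | (p.1 < p.2 ∧ p.2 ≤ p.1 + s * x1) ∧ v < min p.1 p.2}) = (∅ : Set ℝ) := by
        ext b
        simp only [Set.mem_preimage, Set.mem_setOf_eq, Set.mem_empty_iff_false, iff_false]
        rintro ⟨⟨hab, _⟩, hmin⟩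
        exact hva (lt_of_lt_of_le hmin (min_le_left _ _))
      rw [hemp, measure_empty]
  rw [lintegral_congr hslice, lintegral_indicator measurableSet_Ioi]
  have hcongr : ∀ a ∈ Set.Ioi v, expMeasure x2 (Set.Ioc a (a + s * x1)) =
      ENNReal.ofReal (Real.exp (-(x2 * a)) * (1 - Real.exp (-(x1 * x2 * s)))) := by
    intro a ha
    have ha0 : 0 ≤ a := hv.trans (le_of_lt ha)
    rw [expMeasure_Ioc h2 ha0 (by nlinarith)]
    congr 1
    rw [mul_one_sub, ← Real.exp_add]
    ring_nf
  rw [setLIntegral_congr_fun_ae measurableSet_Ioi (ae_of_all _ hcongr)]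
  have hmeas : Measurable fun a : ℝ =>
      ENNReal.ofReal (Real.exp (-(x2 * a)) * (1 - Real.exp (-(x1 * x2 * s)))) :=
    Measurable.ennreal_ofReal (by fun_prop)
  rw [expMeasure_eq_withDensity, restrict_withDensity measurableSet_Ioi,
    lintegral_withDensity_eq_lintegral_mul _ (measurable_exponentialPDF x1) hmeas]
  simp only [Pi.mul_apply]
  have hcongr2 : ∀ a ∈ Set.Ioi v,
      exponentialPDF x1 a * ENNReal.ofReal (Real.exp (-(x2 * a)) * (1 - Real.exp (-(x1 * x2 * s))))
      = ENNReal.ofReal ((x1 / (x1 + x2)) * (1 - Real.exp (-(x1 * x2 * s)))) *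
          exponentialPDF (x1 + x2) a := by
    intro a ha
    have ha0 : 0 ≤ a := hv.trans (le_of_lt ha)
    rw [exponentialPDF_of_nonneg ha0, exponentialPDF_of_nonneg ha0,
      ← ENNReal.ofReal_mul (by positivity),
      ← ENNReal.ofReal_mul (mul_nonneg (by positivity) hc0)]
    congr 1
    have hE : Real.exp (-((x1 + x2) * a)) = Real.exp (-(x1 * a)) * Real.exp (-(x2 * a)) := by
      rw [← Real.exp_add]; ring_nf
    rw [hE]
    field_simp
  rw [setLIntegral_congr_fun_ae measurableSet_Ioi (ae_of_all _ hcongr2),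
    lintegral_const_mul _ (measurable_exponentialPDF (x1 + x2))]
  have : ∫⁻ a in Set.Ioi v, exponentialPDF (x1 + x2) a = expMeasure (x1 + x2) (Set.Ioi v) :=
    (expMeasure_apply _ measurableSet_Ioi).symm
  rw [this, expMeasure_Ioi (by positivity) hv,
    ← ENNReal.ofReal_mul (mul_nonneg (by positivity) hc0)]
  congr 1
  ring

/-- `n = 2` restart step: on the merger-by-time-`s` event, the clock
`ξ1 ⊓ ξ2` of the merged block is `Exp (x1 + x2)`-distributed and independent of
the merger event:
`P(merger ∩ {ξ1 ⊓ ξ2 > v}) = exp (-(x1+x2) v) * (1 - exp (-x1 x2 s))`. -/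
theorem stmt11 {Ω : Type*} [MeasurableSpace Ω] (P : Measure Ω) [IsProbabilityMeasure P]
    (x1 x2 : ℝ) (h1 : 0 < x1) (h2 : 0 < x2)
    (ξ1 ξ2 : Ω → ℝ) (hm1 : Measurable ξ1) (hm2 : Measurable ξ2)
    (hl1 : Measure.map ξ1 P = expMeasure x1) (hl2 : Measure.map ξ2 P = expMeasure x2)
    (hindep : IndepFun ξ1 ξ2 P) (s : ℝ) (hs : 0 < s) :
    ∀ v : ℝ, 0 ≤ v →
      P ({ω | (ξ1 ω < ξ2 ω ∧ ξ2 ω ≤ ξ1 ω + s * x1) ∨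
              (ξ2 ω < ξ1 ω ∧ ξ1 ω ≤ ξ2 ω + s * x2)} ∩
          {ω | v < min (ξ1 ω) (ξ2 ω)}) =
        ENNReal.ofReal (Real.exp (-((x1 + x2) * v)) * (1 - Real.exp (-(x1 * x2 * s)))) := by
  intro v hv
  have hP1 : IsProbabilityMeasure (expMeasure x1) := isProbabilityMeasure_expMeasure h1
  have hP2 : IsProbabilityMeasure (expMeasure x2) := isProbabilityMeasure_expMeasure h2
  set A1 : Set (ℝ × ℝ) := {p | (p.1 < p.2 ∧ p.2 ≤ p.1 + s * x1) ∧ v < min p.1 p.2} with hA1def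
  set A2 : Set (ℝ × ℝ) := {p | (p.2 < p.1 ∧ p.1 ≤ p.2 + s * x2) ∧ v < min p.1 p.2} with hA2def
  have hA1 : MeasurableSet A1 :=
    ((measurableSet_lt measurable_fst measurable_snd).inter
      (measurableSet_le measurable_snd (measurable_fst.add_const _))).inter
      (measurableSet_lt measurable_const (measurable_fst.min measurable_snd))
  have hA2 : MeasurableSet A2 :=
    ((measurableSet_lt measurable_snd measurable_fst).inter
      (measurableSet_le measurable_fst (measurable_snd.add_const _))).inter
      (measurableSet_lt measurable_const (measurable_fst.min measurable_snd))
  have hmap : Measure.map (fun ω => (ξ1 ω, ξ2 ω)) P = (expMeasure x1).prod (expMeasure x2) := by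
    rw [← hl1, ← hl2]
    exact (indepFun_iff_map_prod_eq_prod_map_map hm1.aemeasurable hm2.aemeasurable).1 hindep
  have hset : ({ω | (ξ1 ω < ξ2 ω ∧ ξ2 ω ≤ ξ1 ω + s * x1) ∨
          (ξ2 ω < ξ1 ω ∧ ξ1 ω ≤ ξ2 ω + s * x2)} ∩ {ω | v < min (ξ1 ω) (ξ2 ω)})
      = (fun ω => (ξ1 ω, ξ2 ω)) ⁻¹' (A1 ∪ A2) := by
    ext ω
    simp only [hA1def, hA2def, Set.mem_inter_iff, Set.mem_setOf_eq, Set.mem_preimage,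
      Set.mem_union]
    tauto
  rw [hset, ← Measure.map_apply (hm1.prodMk hm2) (hA1.union hA2), hmap]
  have hdisj : Disjoint A1 A2 := by
    rw [Set.disjoint_left]
    rintro ⟨a, b⟩ ⟨⟨hab, _⟩, _⟩ ⟨⟨hba, _⟩, _⟩
    exact absurd hba (not_lt.2 hab.le)
  rw [measure_union hdisj hA2]
  have hswap : ((expMeasure x1).prod (expMeasure x2)) A2 =
      ((expMeasure x2).prod (expMeasure x1))
        {p : ℝ × ℝ | (p.1 < p.2 ∧ p.2 ≤ p.1 + s * x2) ∧ v < min p.1 p.2} := by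
    have h := Measure.prod_swap (μ := expMeasure x2) (ν := expMeasure x1)
    rw [← h, Measure.map_apply measurable_swap hA2]
    congr 1
    ext ⟨a, b⟩
    simp only [hA2def, Set.mem_preimage, Prod.swap_prod_mk, Set.mem_setOf_eq]
    rw [min_comm]
  rw [key_piece h1 h2 hs hv, hswap, key_piece h2 h1 hs hv]
  have hc1 : (0:ℝ) ≤ 1 - Real.exp (-(x1 * x2 * s)) := by
    linarith [exp_le_one' (mul_pos h1 h2) hs.le]
  have hc2 : (0:ℝ) ≤ 1 - Real.exp (-(x2 * x1 * s)) := by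
    linarith [exp_le_one' (mul_pos h2 h1) hs.le]
  rw [← ENNReal.ofReal_add (mul_nonneg (by positivity) (mul_nonneg (Real.exp_nonneg _) hc1))
    (mul_nonneg (by positivity) (mul_nonneg (Real.exp_nonneg _) hc2))]
  congr 1
  have e1 : x2 * x1 * s = x1 * x2 * s := by ring
  have e2 : x2 + x1 = x1 + x2 := by ring
  rw [e1, e2]
  have hx12 : x1 + x2 ≠ 0 := by positivity
  field_simp
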